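/- Let K be a complete nonarchimedean field of characteristic 0 with residue characteristic p > 0, and let ρ > 1. Then for any f = Σ_k g_k t^k in the Tate algebra T_{n+1}(ρ) of power series converging on the closed polydisc of radius ρ (with variables x₁,…,x_n,t), the series Σ_k g_k/(k+1) converges in T_n(ρ); i.e. the formal integral ∫₀¹ f dt = Σ_k g_k/(k+1) defines a continuous K-linear map T_{n+1}(ρ) → T_n(ρ). -/

import Mathlib

open Filter

variable {K : Type*} [NontriviallyNormedField K]

/-- The degree `|ν|` of a multi-index. -/
def mdeg {n : ℕ} (ν : Fin n →₀ ℕ) : ℕ := ν.sum fun _ k => k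

/-- The coefficient family `a : ν, k ↦ a_{ν,k}` (coefficient of `x^ν t^k`) represents an
element of the Tate algebra `T_{n+1}(ρ)` of power series converging on the closed polydisc of
radius `ρ`:  `‖a_{ν,k}‖ ρ^{|ν|+k} → 0`. -/
def IsTateCoeff (n : ℕ) (ρ : ℝ) (a : (Fin n →₀ ℕ) → ℕ → K) : Prop :=
  Tendsto (fun z : (Fin n →₀ ℕ) × ℕ => ‖a z.1 z.2‖ * ρ ^ (mdeg z.1 + z.2))
    cofinite (nhds 0)


lemma aux_norm_inv_le [CharZero K] {p : ℕ} (hp : p.Prime) {c : ℝ} (hc : 0 < c)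
    (hnorm : ∀ q : ℚ, ‖(q : K)‖ = ((padicNorm p q : ℝ)) ^ c) (k : ℕ) :
    ‖((k : K) + 1)⁻¹‖ ≤ ((k : ℝ) + 1) ^ c := by
  haveI : Fact p.Prime := ⟨hp⟩
  have hk : ((k : K) + 1) = (((k + 1 : ℕ) : ℚ) : K) := by push_cast; ring
  have hne : ((k + 1 : ℕ) : ℚ) ≠ 0 := by positivity
  rw [hk, norm_inv, hnorm]
  have hpos : (0 : ℚ) < padicNorm p ((k + 1 : ℕ) : ℚ) :=
    lt_of_le_of_ne (padicNorm.nonneg _) (Ne.symm (padicNorm.nonzero hne))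
  rw [← Real.inv_rpow (by exact_mod_cast hpos.le)]
  apply Real.rpow_le_rpow (by positivity) ?_ hc.le
  -- ((padicNorm p (k+1) : ℝ))⁻¹ ≤ (k : ℝ) + 1
  have hval : padicNorm p ((k + 1 : ℕ) : ℚ)
      = ((p : ℚ) ^ (padicValNat p (k + 1) : ℤ))⁻¹ := by
    rw [padicNorm.eq_zpow_of_nonzero hne, padicValRat.of_nat, zpow_neg]
  have hdvd : p ^ padicValNat p (k + 1) ≤ k + 1 :=
    Nat.le_of_dvd (Nat.succ_pos k) pow_padicValNat_dvd
  rw [hval, Rat.cast_inv, Rat.cast_zpow, Rat.cast_natCast, inv_inv, zpow_natCast]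
  calc ((p : ℝ) ^ padicValNat p (k + 1)) = ((p ^ padicValNat p (k + 1) : ℕ) : ℝ) := by
        push_cast; ring
    _ ≤ ((k + 1 : ℕ) : ℝ) := by exact_mod_cast hdvd
    _ = (k : ℝ) + 1 := by push_cast; ring

lemma aux_D_tendsto [CharZero K] {p : ℕ} (hp : p.Prime) {c : ℝ} (hc : 0 < c)
    (hnorm : ∀ q : ℚ, ‖(q : K)‖ = ((padicNorm p q : ℝ)) ^ c) {ρ : ℝ} (hρ : 1 < ρ) :
    Tendsto (fun k : ℕ => ‖((k : K) + 1)⁻¹‖ * ρ⁻¹ ^ k) atTop (nhds 0) := by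
  have hρ0 : (0 : ℝ) < ρ := lt_trans one_pos hρ
  set m : ℕ := ⌈c⌉₊ with hm
  have hr : ‖ρ⁻¹‖ < 1 := by
    rw [Real.norm_eq_abs, abs_of_pos (by positivity)]
    rw [inv_lt_one_iff₀]; right; exact hρ
  have h0 : Tendsto (fun j : ℕ => (j : ℝ) ^ m * ρ⁻¹ ^ j) atTop (nhds 0) :=
    (summable_pow_mul_geometric_of_norm_lt_one m hr).tendsto_atTop_zero
  have h1 : Tendsto (fun k : ℕ => ρ * (((k : ℝ) + 1) ^ m * ρ⁻¹ ^ (k + 1))) atTop (nhds 0) := by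
    have h2 := (h0.comp (tendsto_add_atTop_nat 1)).const_mul ρ
    rw [mul_zero] at h2
    convert h2 using 2 with k
    simp [Function.comp]
  apply squeeze_zero (fun k => by positivity) ?_ h1
  intro k
  have hb1 : ‖((k : K) + 1)⁻¹‖ ≤ ((k : ℝ) + 1) ^ m := by
    refine (aux_norm_inv_le hp hc hnorm k).trans ?_
    calc ((k : ℝ) + 1) ^ c ≤ ((k : ℝ) + 1) ^ (m : ℝ) :=
          Real.rpow_le_rpow_of_exponent_le (by have := Nat.cast_nonneg (α := ℝ) k; linarith) (Nat.le_ceil c)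
      _ = ((k : ℝ) + 1) ^ m := Real.rpow_natCast _ m
  have heq : ρ * (((k : ℝ) + 1) ^ m * ρ⁻¹ ^ (k + 1)) = ((k : ℝ) + 1) ^ m * ρ⁻¹ ^ k := by
    rw [pow_succ]
    field_simp
  rw [heq]
  exact mul_le_mul_of_nonneg_right hb1 (by positivity)

/-- Let `K` be a complete nonarchimedean field of characteristic `0` with residue
characteristic `p > 0` (the valuation restricts on `ℚ` to a power of the `p`-adic one), and
let `ρ > 1`.  For `f = Σ_k g_k t^k ∈ T_{n+1}(ρ)` the series `Σ_k g_k/(k+1)` converges in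
`T_n(ρ)`: coefficientwise the sums `Σ_k a_{ν,k}/(k+1)` converge, the resulting coefficient
family again satisfies the `T_n(ρ)` condition, and the formal integral
`∫₀¹ f dt = Σ_k g_k/(k+1)` defines a continuous (bounded, with a uniform constant `C`)
`K`-linear map `T_{n+1}(ρ) → T_n(ρ)`. -/
theorem tate_formal_integral [CompleteSpace K] [IsUltrametricDist K] [CharZero K]
    (hval : ∃ p : ℕ, p.Prime ∧ ∃ c : ℝ, 0 < c ∧
      ∀ q : ℚ, ‖(q : K)‖ = ((padicNorm p q : ℝ)) ^ c)
    (n : ℕ) {ρ : ℝ} (hρ : 1 < ρ) :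
    ∃ C : ℝ, 0 < C ∧
      ∃ I : ((Fin n →₀ ℕ) → ℕ → K) → ((Fin n →₀ ℕ) → K),
        (∀ a, IsTateCoeff n ρ a →
          (∀ ν, HasSum (fun k : ℕ => a ν k * ((k : K) + 1)⁻¹) (I a ν)) ∧
          Tendsto (fun ν => ‖I a ν‖ * ρ ^ mdeg ν) cofinite (nhds 0) ∧
          (⨆ ν, ‖I a ν‖ * ρ ^ mdeg ν) ≤
            C * ⨆ z : (Fin n →₀ ℕ) × ℕ, ‖a z.1 z.2‖ * ρ ^ (mdeg z.1 + z.2)) ∧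
        (∀ a b, IsTateCoeff n ρ a → IsTateCoeff n ρ b → I (a + b) = I a + I b) ∧
        (∀ (c : K) a, IsTateCoeff n ρ a →
          I (fun ν k => c * a ν k) = fun ν => c * I a ν) := by
  obtain ⟨p, hp, c, hc, hnorm⟩ := hval
  have hρ0 : (0 : ℝ) < ρ := lt_trans one_pos hρ
  set D : ℕ → ℝ := fun k => ‖((k : K) + 1)⁻¹‖ * ρ⁻¹ ^ k with hD
  have hDt : Tendsto D atTop (nhds 0) := aux_D_tendsto hp hc hnorm hρ
  obtain ⟨M, hM⟩ := hDt.bddAbove_range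
  set C : ℝ := max M 1 with hCdef
  have hC1 : (1 : ℝ) ≤ C := le_max_right _ _
  have hC0 : (0 : ℝ) < C := lt_of_lt_of_le one_pos hC1
  have hDC : ∀ k, D k ≤ C := fun k =>
    le_trans (hM (Set.mem_range_self k)) (le_max_left _ _)
  have est : ∀ (a : (Fin n →₀ ℕ) → ℕ → K) ν k,
      ‖a ν k * ((k : K) + 1)⁻¹‖ * ρ ^ mdeg ν ≤ C * (‖a ν k‖ * ρ ^ (mdeg ν + k)) := by
    intro a ν k
    rw [norm_mul]
    have h1 : ‖a ν k‖ * ‖((k : K) + 1)⁻¹‖ * ρ ^ mdeg ν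
        = (‖a ν k‖ * ρ ^ (mdeg ν + k)) * D k := by
      simp only [hD]
      have hz : ρ ^ k * ρ⁻¹ ^ k = 1 := by
        rw [inv_pow]; exact mul_inv_cancel₀ (by positivity)
      rw [pow_add]
      linear_combination (-(‖a ν k‖ * ‖((k : K) + 1)⁻¹‖ * ρ ^ mdeg ν)) * hz
    rw [h1, mul_comm C _]
    exact mul_le_mul_of_nonneg_left (hDC k) (by positivity)
  have htend : ∀ (a : (Fin n →₀ ℕ) → ℕ → K), IsTateCoeff n ρ a → ∀ ν,
      Tendsto (fun k : ℕ => ‖a ν k‖ * ρ ^ (mdeg ν + k)) cofinite (nhds 0) := by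
    intro a ha ν
    have hinj : Function.Injective (fun k : ℕ => ((ν, k) : (Fin n →₀ ℕ) × ℕ)) := by
      intro x y h
      simpa using h
    exact ha.comp hinj.tendsto_cofinite
  have hsum : ∀ (a : (Fin n →₀ ℕ) → ℕ → K), IsTateCoeff n ρ a → ∀ ν,
      Summable (fun k : ℕ => a ν k * ((k : K) + 1)⁻¹) := by
    intro a ha ν
    apply NonarchimedeanAddGroup.summable_of_tendsto_cofinite_zero
    rw [tendsto_zero_iff_norm_tendsto_zero]
    have hg := (htend a ha ν).const_mul C
    rw [mul_zero] at hg
    apply squeeze_zero (fun k => norm_nonneg _) ?_ hg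
    intro k
    have h2 : ‖a ν k * ((k : K) + 1)⁻¹‖ ≤ ‖a ν k * ((k : K) + 1)⁻¹‖ * ρ ^ mdeg ν :=
      le_mul_of_one_le_right (norm_nonneg _) (one_le_pow₀ hρ.le)
    exact h2.trans (est a ν k)
  have hkey : ∀ (a : (Fin n →₀ ℕ) → ℕ → K) (ν) (B : ℝ), 0 ≤ B →
      (∀ k, ‖a ν k‖ * ρ ^ (mdeg ν + k) ≤ B) →
      ‖∑' k, a ν k * ((k : K) + 1)⁻¹‖ * ρ ^ mdeg ν ≤ C * B := by
    intro a ν B hB h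
    have hρd : (0 : ℝ) < ρ ^ mdeg ν := by positivity
    rw [← le_div_iff₀ hρd]
    apply IsUltrametricDist.norm_tsum_le_of_forall_le_of_nonneg (by positivity)
    intro k
    rw [le_div_iff₀ hρd]
    exact (est a ν k).trans (mul_le_mul_of_nonneg_left (h k) hC0.le)
  refine ⟨C, hC0, fun a ν => ∑' k, a ν k * ((k : K) + 1)⁻¹, ?_, ?_, ?_⟩
  · intro a ha
    refine ⟨fun ν => (hsum a ha ν).hasSum, ?_, ?_⟩
    · rw [NormedAddCommGroup.tendsto_nhds_zero]
      intro ε hε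
      have hε' : 0 < ε / (2 * C) := by positivity
      have hfin := (NormedAddCommGroup.tendsto_nhds_zero.mp ha) _ hε'
      rw [eventually_cofinite] at hfin ⊢
      apply Set.Finite.subset (hfin.image Prod.fst)
      intro ν hν
      simp only [Set.mem_setOf_eq, not_lt] at hν
      by_contra hmem
      have hb : ∀ k, ‖a ν k‖ * ρ ^ (mdeg ν + k) ≤ ε / (2 * C) := by
        intro k
        have hnm : (ν, k) ∉ {z : (Fin n →₀ ℕ) × ℕ |
            ¬ ‖‖a z.1 z.2‖ * ρ ^ (mdeg z.1 + z.2)‖ < ε / (2 * C)} :=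
          fun h => hmem ⟨(ν, k), h, rfl⟩
        simp only [Set.mem_setOf_eq, not_not] at hnm
        rw [Real.norm_of_nonneg (by positivity)] at hnm
        exact hnm.le
      have hle := hkey a ν _ hε'.le hb
      have hCe : C * (ε / (2 * C)) = ε / 2 := by
        field_simp
      rw [hCe] at hle
      rw [Real.norm_of_nonneg (by positivity)] at hν
      linarith
    · have hbdd : BddAbove (Set.range fun z : (Fin n →₀ ℕ) × ℕ =>
          ‖a z.1 z.2‖ * ρ ^ (mdeg z.1 + z.2)) := ha.bddAbove_range_of_cofinite
      have hSle : ∀ z : (Fin n →₀ ℕ) × ℕ, ‖a z.1 z.2‖ * ρ ^ (mdeg z.1 + z.2) ≤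
          ⨆ z : (Fin n →₀ ℕ) × ℕ, ‖a z.1 z.2‖ * ρ ^ (mdeg z.1 + z.2) :=
        fun z => le_ciSup hbdd z
      have hS0 : 0 ≤ ⨆ z : (Fin n →₀ ℕ) × ℕ, ‖a z.1 z.2‖ * ρ ^ (mdeg z.1 + z.2) :=
        le_trans (by positivity) (hSle (0, 0))
      exact ciSup_le fun ν => hkey a ν _ hS0 fun k => hSle (ν, k)
  · intro a b ha hb
    funext ν
    show (∑' k, (a + b) ν k * ((k : K) + 1)⁻¹) = _
    simp only [Pi.add_apply, add_mul]
    rw [Summable.tsum_add (hsum a ha ν) (hsum b hb ν)]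
  · intro c0 a ha
    funext ν
    show (∑' k, (c0 * a ν k) * ((k : K) + 1)⁻¹) = _
    simp only [mul_assoc]
    exact tsum_mul_left
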